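/- Let μ ∈ ℝ, σ > 0, and let S ⊆ ℝ be measurable with survival probability α = N(μ,σ²)(S) > 0. Then the second moment of the truncated Gaussian about its untruncated mean satisfies E_{y ~ N(μ,σ²,S)}[(y − μ)²] ≤ (4 − 2·log α)·σ². Equivalently, ∫_S (y − μ)² dN(μ,σ²)(y) ≤ α·(4 − 2·log α)·σ². -/

import Mathlib

open MeasureTheory ProbabilityTheory Real Set
open scoped ENNReal NNReal

-- exponential moment computations
lemma expint1 {t : ℝ} (ht : 0 < t) :
    IntegrableOn (fun u : ℝ => u * Real.exp (-(t * u))) (Ioi 0) := by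
  have := integrableOn_rpow_mul_exp_neg_mul_rpow (p := 1) (s := 1) (b := t) (by norm_num) (by norm_num) ht
  simpa [Real.rpow_one] using this

lemma expint2 {t : ℝ} (ht : 0 < t) :
    IntegrableOn (fun u : ℝ => u ^ 2 * Real.exp (-(t * u))) (Ioi 0) := by
  have := integrableOn_rpow_mul_exp_neg_mul_rpow (p := 1) (s := 2) (b := t) (by norm_num) (by norm_num) ht
  have h2 : ∀ u : ℝ, u ^ (2:ℝ) = u ^ 2 := fun u => by
    rw [show (2:ℝ) = ((2:ℕ):ℝ) by norm_num, Real.rpow_natCast]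
  simpa [Real.rpow_one, h2] using this

lemma expval1 {t : ℝ} (ht : 0 < t) :
    ∫ u in Ioi (0:ℝ), u * Real.exp (-(t * u)) = 1 / t ^ 2 := by
  have := Real.integral_rpow_mul_exp_neg_mul_Ioi (a := 2) (r := t) (by norm_num) ht
  rw [Real.Gamma_two] at this
  simp only [show (2:ℝ) - 1 = 1 by norm_num, Real.rpow_one] at this
  rw [this]
  rw [div_rpow (by norm_num) ht.le, Real.one_rpow]
  rw [show (2:ℝ) = ((2:ℕ):ℝ) by norm_num, Real.rpow_natCast]
  ring

lemma expval2 {t : ℝ} (ht : 0 < t) :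
    ∫ u in Ioi (0:ℝ), u ^ 2 * Real.exp (-(t * u)) = 2 / t ^ 3 := by
  have := Real.integral_rpow_mul_exp_neg_mul_Ioi (a := 3) (r := t) (by norm_num) ht
  have hg : Real.Gamma 3 = 2 := by
    rw [show (3:ℝ) = 2 + 1 by norm_num, Real.Gamma_add_one (by norm_num), Real.Gamma_two]
    norm_num
  rw [hg] at this
  have h2 : ∀ u : ℝ, u ^ ((3:ℝ) - 1) = u ^ 2 := fun u => by
    rw [show (3:ℝ) - 1 = ((2:ℕ):ℝ) by norm_num, Real.rpow_natCast]
  simp only [h2] at this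
  rw [this, div_rpow (by norm_num) ht.le, Real.one_rpow,
    show (3:ℝ) = ((3:ℕ):ℝ) by norm_num, Real.rpow_natCast]
  ring

noncomputable def phic : ℝ := (Real.sqrt (2 * π))⁻¹

lemma pdf01 : gaussianPDFReal 0 1 = fun x => phic * Real.exp (-x ^ 2 / 2) := by
  ext x
  simp [gaussianPDFReal, phic]

lemma pdf01_nonneg (x : ℝ) : 0 ≤ gaussianPDFReal 0 1 x := gaussianPDFReal_nonneg 0 1 x

lemma g01_eq : gaussianReal 0 1 =
    volume.withDensity (fun x => ((gaussianPDFReal 0 1 x).toNNReal : ENNReal)) := by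
  rw [gaussianReal_of_var_ne_zero 0 one_ne_zero]
  rfl

lemma gauss_setIntegral (g : ℝ → ℝ) (T : Set ℝ) (hT : MeasurableSet T) :
    ∫ x in T, g x ∂(gaussianReal 0 1) = ∫ x in T, gaussianPDFReal 0 1 x * g x := by
  rw [g01_eq, restrict_withDensity hT,
    integral_withDensity_eq_integral_smul
      ((measurable_gaussianPDFReal 0 1).real_toNNReal)]
  refine setIntegral_congr_fun hT fun x _ => ?_
  simp [NNReal.smul_def, Real.coe_toNNReal _ (pdf01_nonneg x)]

lemma gauss_integrable_of (g : ℝ → ℝ)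
    (h : Integrable (fun x => gaussianPDFReal 0 1 x * g x) volume) :
    Integrable g (gaussianReal 0 1) := by
  rw [g01_eq, integrable_withDensity_iff_integrable_smul
      ((measurable_gaussianPDFReal 0 1).real_toNNReal)]
  refine h.congr (Filter.Eventually.of_forall fun x => ?_)
  simp [NNReal.smul_def, Real.coe_toNNReal _ (pdf01_nonneg x)]

lemma integrable_sq_gauss : Integrable (fun x : ℝ => x ^ 2) (gaussianReal 0 1) := by
  refine gauss_integrable_of _ ?_
  rw [pdf01]
  have h := integrable_rpow_mul_exp_neg_mul_sq (b := (1:ℝ)/2) (by norm_num) (s := 2) (by norm_num)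
  have h2 : ∀ u : ℝ, u ^ (2:ℝ) = u ^ 2 := fun u => by
    rw [show (2:ℝ) = ((2:ℕ):ℝ) by norm_num, Real.rpow_natCast]
  simp only [h2] at h
  have := (h.const_mul phic)
  refine this.congr (Filter.Eventually.of_forall fun x => ?_)
  ring_nf

noncomputable def hfun (t : ℝ) (u : ℝ) : ℝ :=
  ((max u 0) ^ 2 + 2 * t * max u 0) * Real.exp (-(t * max u 0))

lemma hfun_nonneg {t : ℝ} (ht : 0 < t) (u : ℝ) : 0 ≤ hfun t u := by
  have : (0:ℝ) ≤ max u 0 := le_max_right _ _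
  unfold hfun
  positivity

lemma hfun_of_nonpos {t u : ℝ} (hu : u ≤ 0) : hfun t u = 0 := by
  unfold hfun
  rw [max_eq_right hu]
  simp

lemma hfun_of_pos {t u : ℝ} (hu : 0 < u) :
    hfun t u = (u ^ 2 + 2 * t * u) * Real.exp (-(t * u)) := by
  unfold hfun
  rw [max_eq_left hu.le]

lemma hfun_integrableOn_Ioi {t : ℝ} (ht : 0 < t) : IntegrableOn (hfun t) (Ioi 0) := by
  refine IntegrableOn.congr_fun ((expint2 ht).add ((expint1 ht).const_mul (2 * t)))
    (fun u hu => ?_) measurableSet_Ioi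
  rw [hfun_of_pos hu]
  simp only [Pi.add_apply]
  ring

lemma hfun_integral_Ioi {t : ℝ} (ht : 0 < t) :
    ∫ u in Ioi (0:ℝ), hfun t u = 2 / t ^ 3 + 2 / t := by
  rw [setIntegral_congr_fun measurableSet_Ioi
      (fun u (hu : u ∈ Ioi (0:ℝ)) => hfun_of_pos hu)]
  have : ∀ u : ℝ, (u ^ 2 + 2 * t * u) * Real.exp (-(t * u))
      = u ^ 2 * Real.exp (-(t * u)) + 2 * t * (u * Real.exp (-(t * u))) := fun u => by ring
  simp only [this]
  rw [integral_add (expint2 ht) ((expint1 ht).const_mul (2*t)), expval2 ht,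
    integral_const_mul, expval1 ht]
  field_simp

lemma hfun_integrableOn_Ioi' {t : ℝ} (ht : 0 < t) : IntegrableOn (hfun t) (Ioi (-t)) := by
  have : Ioi (-t) = Ioc (-t) 0 ∪ Ioi (0:ℝ) := by
    rw [Ioc_union_Ioi_eq_Ioi]
    linarith
  rw [this]
  refine IntegrableOn.union ?_ (hfun_integrableOn_Ioi ht)
  refine (integrableOn_zero (s := Ioc (-t) 0)).congr_fun ?_ measurableSet_Ioc
  exact fun u hu => (hfun_of_nonpos hu.2).symm

lemma hfun_integral_Ioi' {t : ℝ} (ht : 0 < t) :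
    ∫ u in Ioi (-t), hfun t u = 2 / t ^ 3 + 2 / t := by
  have hs : Ioi (-t) = Ioc (-t) 0 ∪ Ioi (0:ℝ) := by
    rw [Ioc_union_Ioi_eq_Ioi]; linarith
  rw [hs, setIntegral_union (Ioc_disjoint_Ioi le_rfl) measurableSet_Ioi
      ((hfun_integrableOn_Ioi' ht).mono_set (by rw [hs]; exact subset_union_left))
      (hfun_integrableOn_Ioi ht)]
  rw [setIntegral_congr_fun measurableSet_Ioc
      (fun u (hu : u ∈ Ioc (-t) (0:ℝ)) => hfun_of_nonpos hu.2)]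
  rw [integral_zero, zero_add, hfun_integral_Ioi ht]

-- translation
lemma hfun_shift_integral {t : ℝ} (ht : 0 < t) :
    ∫ x in Ioi (0:ℝ), hfun t (x - t) = 2 / t ^ 3 + 2 / t := by
  have hemb : MeasurableEmbedding (fun x : ℝ => x + t) :=
    (Homeomorph.addRight t).measurableEmbedding
  have hmap : Measure.map (fun x : ℝ => x + t) volume = volume :=
    map_add_right_eq_self volume t
  have := hemb.setIntegral_map (f := fun x : ℝ => x + t)
    (g := fun y : ℝ => hfun t (y - t)) (s := Ioi (0:ℝ)) (μ := volume)
  rw [hmap] at this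
  rw [this]
  have hpre : (fun x : ℝ => x + t) ⁻¹' Ioi 0 = Ioi (-t) := by
    ext x; simp [neg_lt_iff_pos_add, add_comm]
  rw [hpre]
  simp only [add_sub_cancel_right]
  exact hfun_integral_Ioi' ht

lemma hfun_shift_integrable {t : ℝ} (ht : 0 < t) :
    IntegrableOn (fun x : ℝ => hfun t (x - t)) (Ioi 0) := by
  have hemb : MeasurableEmbedding (fun x : ℝ => x + t) :=
    (Homeomorph.addRight t).measurableEmbedding
  have hmap : Measure.map (fun x : ℝ => x + t) volume = volume :=
    map_add_right_eq_self volume t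
  have := hemb.integrableOn_map_iff (f := fun y : ℝ => hfun t (y - t)) (s := Ioi (0:ℝ)) (μ := volume)
  rw [hmap] at this
  rw [this]
  have hpre : (fun x : ℝ => x + t) ⁻¹' Ioi 0 = Ioi (-t) := by
    ext x; simp [neg_lt_iff_pos_add, add_comm]
  rw [hpre]
  simp only [Function.comp_def, add_sub_cancel_right]
  exact hfun_integrableOn_Ioi' ht

lemma integrable_sq_exp : Integrable (fun x : ℝ => x ^ 2 * Real.exp (-x ^ 2 / 2)) volume := by
  have h := integrable_rpow_mul_exp_neg_mul_sq (b := (1:ℝ)/2) (by norm_num) (s := 2) (by norm_num)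
  have h2 : ∀ u : ℝ, u ^ (2:ℝ) = u ^ 2 := fun u => by
    rw [show (2:ℝ) = ((2:ℕ):ℝ) by norm_num, Real.rpow_natCast]
  simp only [h2] at h
  refine h.congr (Filter.Eventually.of_forall fun x => ?_)
  ring_nf

lemma gauss_integral (g : ℝ → ℝ) :
    ∫ x, g x ∂(gaussianReal 0 1) = ∫ x, gaussianPDFReal 0 1 x * g x := by
  rw [g01_eq, integral_withDensity_eq_integral_smul
      ((measurable_gaussianPDFReal 0 1).real_toNNReal)]
  refine integral_congr_ae (Filter.Eventually.of_forall fun x => ?_)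
  simp [NNReal.smul_def, Real.coe_toNNReal _ (pdf01_nonneg x)]

lemma std_bound {T : Set ℝ} (hT : MeasurableSet T) {α : ℝ}
    (hα : α = (gaussianReal 0 1 T).toReal) (hαpos : 0 < α) :
    ∫ x in T, x ^ 2 ∂(gaussianReal 0 1) ≤ α * (4 - 2 * Real.log α) := by
  set L := Real.log α with hLdef
  have hα1 : α ≤ 1 := by
    rw [hα]
    exact ENNReal.toReal_le_of_le_ofReal one_pos.le (by simpa using prob_le_one)
  have hL : L ≤ 0 := Real.log_nonpos hαpos.le hα1
  set t := Real.sqrt (2 - 2 * L) with htdef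
  have ht2 : t ^ 2 = 2 - 2 * L := Real.sq_sqrt (by linarith)
  have ht1 : 1 ≤ t := by
    rw [htdef, show (1:ℝ) = Real.sqrt 1 by simp]
    exact Real.sqrt_le_sqrt (by linarith)
  have ht : 0 < t := lt_of_lt_of_le one_pos ht1
  set q : ℝ → ℝ := fun x => max (x ^ 2 - t ^ 2) 0 with hqdef
  have hqnn : ∀ x, 0 ≤ q x := fun x => le_max_right _ _
  have hqle : ∀ x, q x ≤ x ^ 2 := fun x => by
    rw [hqdef]
    simp only [max_le_iff]
    constructor
    · nlinarith
    · positivity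
  have hqmeas : Measurable q := (measurable_id.pow_const 2).sub_const _ |>.max measurable_const
  -- integrability of q wrt gaussian
  have hqint : Integrable q (gaussianReal 0 1) := by
    refine integrable_sq_gauss.mono (hqmeas.aestronglyMeasurable) ?_
    refine Filter.Eventually.of_forall fun x => ?_
    rw [Real.norm_eq_abs, Real.norm_eq_abs, abs_of_nonneg (hqnn x), abs_of_nonneg (by positivity)]
    exact hqle x
  -- step 1-2
  have step1 : ∫ x in T, x ^ 2 ∂(gaussianReal 0 1)
      ≤ t ^ 2 * α + ∫ x in T, q x ∂(gaussianReal 0 1) := by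
    have h1 : ∫ x in T, x ^ 2 ∂(gaussianReal 0 1)
        ≤ ∫ x in T, (t ^ 2 + q x) ∂(gaussianReal 0 1) := by
      refine setIntegral_mono_on integrable_sq_gauss.integrableOn
        ((integrable_const _).add hqint).integrableOn hT fun x _ => ?_
      have := le_max_left (x ^ 2 - t ^ 2) 0
      rw [hqdef]
      simp only []
      linarith [le_max_left (x ^ 2 - t ^ 2) (0:ℝ)]
    have h2 : ∫ x in T, (t ^ 2 + q x) ∂(gaussianReal 0 1)
        = t ^ 2 * α + ∫ x in T, q x ∂(gaussianReal 0 1) := by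
      rw [integral_add (integrable_const _).integrableOn hqint.integrableOn,
        setIntegral_const, hα, smul_eq_mul, mul_comm, measureReal_def]
    linarith
  -- step 3
  have step3 : ∫ x in T, q x ∂(gaussianReal 0 1) ≤ ∫ x, q x ∂(gaussianReal 0 1) :=
    setIntegral_le_integral hqint (Filter.Eventually.of_forall hqnn)
  -- step 4-6
  have step4 : ∫ x, q x ∂(gaussianReal 0 1)
      = phic * (2 * ∫ x in Ioi (0:ℝ), q x * Real.exp (-x ^ 2 / 2)) := by
    rw [gauss_integral, pdf01]
    have : ∀ x : ℝ, phic * Real.exp (-x ^ 2 / 2) * q x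
        = phic * (q x * Real.exp (-x ^ 2 / 2)) := fun x => by ring
    simp only [this]
    rw [integral_const_mul]
    congr 1
    have h2 := integral_comp_abs (f := fun y => q y * Real.exp (-y ^ 2 / 2))
    have h3 : ∀ x : ℝ, q |x| * Real.exp (-|x| ^ 2 / 2) = q x * Real.exp (-x ^ 2 / 2) := by
      intro x
      rw [hqdef]
      simp only [sq_abs]
    simp only [h3] at h2
    exact h2
  -- integrability of F on Ioi 0
  have hFint : Integrable (fun x : ℝ => q x * Real.exp (-x ^ 2 / 2)) volume := by
    refine integrable_sq_exp.mono
      ((hqmeas.mul ((measurable_id.pow_const 2).neg.div_const 2).exp).aestronglyMeasurable) ?_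
    refine Filter.Eventually.of_forall fun x => ?_
    rw [Real.norm_eq_abs, Real.norm_eq_abs, abs_of_nonneg (by positivity),
      abs_of_nonneg (by positivity)]
    exact mul_le_mul_of_nonneg_right (hqle x) (Real.exp_nonneg _)
  -- step 7: pointwise domination on Ioi 0
  have step7 : ∫ x in Ioi (0:ℝ), q x * Real.exp (-x ^ 2 / 2)
      ≤ Real.exp (-t ^ 2 / 2) * (2 / t ^ 3 + 2 / t) := by
    have hmono : ∫ x in Ioi (0:ℝ), q x * Real.exp (-x ^ 2 / 2)
        ≤ ∫ x in Ioi (0:ℝ), Real.exp (-t ^ 2 / 2) * hfun t (x - t) := by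
      refine setIntegral_mono_on hFint.integrableOn
        ((hfun_shift_integrable ht).const_mul _) measurableSet_Ioi fun x hx => ?_
      rcases le_or_gt x t with hxt | hxt
      · have hq0 : q x = 0 := by
          rw [hqdef]
          simp only [max_eq_right_iff]
          nlinarith [mem_Ioi.mp hx]
        rw [hq0, zero_mul]
        exact mul_nonneg (Real.exp_nonneg _) (hfun_nonneg ht _)
      · have hq1 : q x = x ^ 2 - t ^ 2 := by
          rw [hqdef]
          simp only [max_eq_left_iff]
          nlinarith
        rw [hq1, hfun_of_pos (by linarith : (0:ℝ) < x - t)]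
        have heq : (x - t) ^ 2 + 2 * t * (x - t) = x ^ 2 - t ^ 2 := by ring
        rw [show Real.exp (-t ^ 2 / 2) * (((x - t) ^ 2 + 2 * t * (x - t)) * Real.exp (-(t * (x - t))))
            = ((x - t) ^ 2 + 2 * t * (x - t)) * Real.exp (-t ^ 2 / 2 + -(t * (x - t))) by
              rw [Real.exp_add]; ring, heq]
        refine mul_le_mul_of_nonneg_left (Real.exp_le_exp.mpr (by nlinarith [sq_nonneg (x - t)]))
          (by nlinarith)
    rw [integral_const_mul, hfun_shift_integral ht] at hmono
    exact hmono
  -- step 9: value of exp(-t^2/2)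
  have step9 : Real.exp (-t ^ 2 / 2) = α * Real.exp (-1) := by
    rw [ht2, show -(2 - 2 * L) / 2 = L + -1 by ring, Real.exp_add, hLdef, Real.exp_log hαpos]
  -- numeric bound
  have hphic : phic ≤ 1 / 2 := by
    rw [phic]
    rw [show (1:ℝ)/2 = (Real.sqrt 4)⁻¹ by
      rw [show (4:ℝ) = 2 ^ 2 by norm_num, Real.sqrt_sq (by norm_num : (0:ℝ) ≤ 2)]; norm_num]
    refine inv_anti₀ (by norm_num) (Real.sqrt_le_sqrt (by nlinarith [Real.pi_gt_three]))
  have hexp1 : Real.exp (-1) ≤ 1 / 2 := by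
    rw [Real.exp_neg]
    refine inv_le_of_inv_le₀ (by norm_num) ?_
    norm_num
    linarith [Real.add_one_le_exp 1]
  have hsum : 2 / t ^ 3 + 2 / t ≤ 4 := by
    have h3 : (1:ℝ) ≤ t ^ 3 := one_le_pow₀ ht1
    have ha : 2 / t ^ 3 ≤ 2 := by
      rw [div_le_iff₀ (by positivity)]; nlinarith
    have hb : 2 / t ≤ 2 := by
      rw [div_le_iff₀ ht]; nlinarith
    linarith
  have hphic0 : 0 ≤ phic := by rw [phic]; positivity
  have hkey : phic * (2 * (Real.exp (-t ^ 2 / 2) * (2 / t ^ 3 + 2 / t))) ≤ 2 * α := by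
    rw [step9]
    have h1 : (0:ℝ) ≤ 2 / t ^ 3 + 2 / t := by positivity
    have h2 : (0:ℝ) ≤ Real.exp (-1) := Real.exp_nonneg _
    have hA : Real.exp (-1) * (2 / t ^ 3 + 2 / t) ≤ 2 := by nlinarith
    have hB : α * Real.exp (-1) * (2 / t ^ 3 + 2 / t) ≤ α * 2 := by
      rw [mul_assoc]
      exact mul_le_mul_of_nonneg_left hA hαpos.le
    have hY0 : (0:ℝ) ≤ α * Real.exp (-1) * (2 / t ^ 3 + 2 / t) := by positivity
    nlinarith
  -- assemble
  have chain : ∫ x in T, x ^ 2 ∂(gaussianReal 0 1) ≤ t ^ 2 * α + 2 * α := by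
    have h5 : ∫ x, q x ∂(gaussianReal 0 1)
        ≤ phic * (2 * (Real.exp (-t ^ 2 / 2) * (2 / t ^ 3 + 2 / t))) := by
      rw [step4]
      refine mul_le_mul_of_nonneg_left ?_ hphic0
      exact mul_le_mul_of_nonneg_left step7 (by norm_num)
    linarith
  have : t ^ 2 * α + 2 * α = α * (4 - 2 * L) := by rw [ht2]; ring
  linarith

/-- For a Gaussian `N(μ, σ²)` and a measurable set `S ⊆ ℝ` with survival
probability `α = N(μ,σ²)(S) > 0`, the second moment of the truncated Gaussian about the
untruncated mean `μ` satisfies `E_{y ~ N(μ,σ²,S)}[(y − μ)²] ≤ (4 − 2 log α) σ²`; equivalently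
`∫_S (y − μ)² dN(μ,σ²)(y) ≤ α (4 − 2 log α) σ²`. -/
theorem stmt_0 (μ σ : ℝ) (hσ : 0 < σ) (S : Set ℝ) (hS : MeasurableSet S)
    (α : ℝ) (hα : α = (gaussianReal μ ⟨σ ^ 2, sq_nonneg σ⟩ S).toReal) (hαpos : 0 < α) :
    (∫ y, (y - μ) ^ 2 ∂(ProbabilityTheory.cond (gaussianReal μ ⟨σ ^ 2, sq_nonneg σ⟩) S))
        ≤ (4 - 2 * Real.log α) * σ ^ 2 ∧
      (∫ y in S, (y - μ) ^ 2 ∂(gaussianReal μ ⟨σ ^ 2, sq_nonneg σ⟩))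
        ≤ α * ((4 - 2 * Real.log α) * σ ^ 2) := by
  set g : ℝ → ℝ := fun x => σ * x + μ with hgdef
  have hgmeas : Measurable g := (measurable_const_mul σ).add_const μ
  have hmapeq : Measure.map g (gaussianReal 0 1) = gaussianReal μ ⟨σ ^ 2, sq_nonneg σ⟩ := by
    have h1 := gaussianReal_map_const_mul (μ := 0) (v := 1) σ
    have h2 := gaussianReal_map_add_const (μ := σ * 0) (v := ⟨σ ^ 2, sq_nonneg σ⟩ * 1) μ
    erw [← h1, Measure.map_map (measurable_add_const μ) (measurable_const_mul σ)] at h2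
    have hco : ((fun x => x + μ) ∘ fun x => σ * x) = g := by ext x; simp [hgdef]
    rw [hco] at h2
    rw [h2]
    congr 1
    · simp
    · exact mul_one _
  have hgemb : MeasurableEmbedding g := by
    have : g = (fun x => x + μ) ∘ (fun x => σ * x) := by ext x; simp [hgdef]
    rw [this]
    exact (Homeomorph.addRight μ).measurableEmbedding.comp
      ((Homeomorph.mulLeft₀ σ hσ.ne').measurableEmbedding)
  set T : Set ℝ := g ⁻¹' S with hTdef
  have hTmeas : MeasurableSet T := hS.preimage hgmeas
  have hαT : α = (gaussianReal 0 1 T).toReal := by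
    rw [hα, ← hmapeq, Measure.map_apply hgmeas hS]
  have hstd := std_bound hTmeas hαT hαpos
  have hset : ∫ y in S, (y - μ) ^ 2 ∂(gaussianReal μ ⟨σ ^ 2, sq_nonneg σ⟩)
      = σ ^ 2 * ∫ x in T, x ^ 2 ∂(gaussianReal 0 1) := by
    rw [← hmapeq, hgemb.setIntegral_map]
    rw [← integral_const_mul]
    refine setIntegral_congr_fun hTmeas fun x _ => ?_
    simp only [hgdef]
    ring
  have P2 : ∫ y in S, (y - μ) ^ 2 ∂(gaussianReal μ ⟨σ ^ 2, sq_nonneg σ⟩)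
      ≤ α * ((4 - 2 * Real.log α) * σ ^ 2) := by
    rw [hset]
    calc σ ^ 2 * ∫ x in T, x ^ 2 ∂(gaussianReal 0 1)
        ≤ σ ^ 2 * (α * (4 - 2 * Real.log α)) :=
          mul_le_mul_of_nonneg_left hstd (sq_nonneg σ)
      _ = α * ((4 - 2 * Real.log α) * σ ^ 2) := by ring
  refine ⟨?_, P2⟩
  have hcond : ∫ y, (y - μ) ^ 2 ∂(ProbabilityTheory.cond (gaussianReal μ ⟨σ ^ 2, sq_nonneg σ⟩) S)
      = α⁻¹ * ∫ y in S, (y - μ) ^ 2 ∂(gaussianReal μ ⟨σ ^ 2, sq_nonneg σ⟩) := by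
    rw [ProbabilityTheory.cond, integral_smul_measure, ENNReal.toReal_inv, ← hα, smul_eq_mul]
  rw [hcond]
  have h0 : (0:ℝ) ≤ α⁻¹ := by positivity
  calc α⁻¹ * ∫ y in S, (y - μ) ^ 2 ∂(gaussianReal μ ⟨σ ^ 2, sq_nonneg σ⟩)
      ≤ α⁻¹ * (α * ((4 - 2 * Real.log α) * σ ^ 2)) := mul_le_mul_of_nonneg_left P2 h0
    _ = (4 - 2 * Real.log α) * σ ^ 2 := by
        field_simp
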